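/- For every joint probability distribution P on X_1 × X_2, the conditional mutual information satisfies I_P(X_1;Y_2|X_2) ≤ ∑_{x_2 ∈ X_2} P_2(x_2)·(1 − P(X_1 = 0 | X_2 = x_2))·C_{1,x_2}, where P(X_1 = 0 | X_2 = x_2) = P(0,x_2)/P_2(x_2) and terms with P_2(x_2) = 0 are taken as 0. Symmetrically, I_P(X_2;Y_1|X_1) ≤ ∑_{x_1 ∈ X_1} P_1(x_1)·(1 − P(X_2 = 0 | X_1 = x_1))·C_{2,x_1}. -/

import Mathlib

open Real BigOperators Finset

/-- Entropy of a finite probability vector, with the convention `0 * log 0 = 0`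
(automatic since `Real.log 0 = 0`). -/
noncomputable def ent {n : ℕ} (p : Fin n → ℝ) : ℝ := -∑ y, p y * Real.log (p y)

/-- `Q` is a probability distribution on `Fin n`. -/
def IsProbDist {n : ℕ} (Q : Fin n → ℝ) : Prop := (∀ x, 0 ≤ Q x) ∧ ∑ x, Q x = 1

/-- `P` is a joint probability distribution. -/
def IsJointProbDist {m n : ℕ} (P : Fin m → Fin n → ℝ) : Prop :=
  (∀ x1 x2, 0 ≤ P x1 x2) ∧ ∑ x1, ∑ x2, P x1 x2 = 1

/-- First marginal `P_1`. -/
noncomputable def marg1 {m n : ℕ} (P : Fin m → Fin n → ℝ) (x1 : Fin m) : ℝ := ∑ x2, P x1 x2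

/-- Second marginal `P_2`. -/
noncomputable def marg2 {m n : ℕ} (P : Fin m → Fin n → ℝ) (x2 : Fin n) : ℝ := ∑ x1, P x1 x2

/-- Conditional mutual information `I_P(X₁;Y₂|X₂)`; terms with
`P x1 x2 * W2 x1 x2 y2 = 0` vanish, and summands with `marg2 P x2 = 0` vanish
since then `P x1 x2 = 0`. -/
noncomputable def condMI1 {m n t : ℕ} (P : Fin m → Fin n → ℝ)
    (W2 : Fin m → Fin n → Fin t → ℝ) : ℝ :=
  ∑ x2, ∑ x1, ∑ y2, P x1 x2 * W2 x1 x2 y2 *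
    Real.log (W2 x1 x2 y2 / ((∑ x1', P x1' x2 * W2 x1' x2 y2) / marg2 P x2))

/-- Conditional mutual information `I_P(X₂;Y₁|X₁)`. -/
noncomputable def condMI2 {m n t : ℕ} (P : Fin m → Fin n → ℝ)
    (W1 : Fin m → Fin n → Fin t → ℝ) : ℝ :=
  ∑ x1, ∑ x2, ∑ y1, P x1 x2 * W1 x1 x2 y1 *
    Real.log (W1 x1 x2 y1 / ((∑ x2', P x1 x2' * W1 x1 x2' y1) / marg1 P x1))

/-- Structural assumptions of a generalized push-to-talk two-way channel with
input alphabets `Fin (r1+3)`, `Fin (r2+3)` and output alphabets `Fin (s1+2)`,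
`Fin (s2+2)`: both marginal channels are transition matrices; the row of
input `0` of each user is uniform; for each state, the nonzero-input rows are
permutations of the row of input `1` and have constant column sums
(weak symmetry). -/
def GenPTT {r1 r2 s1 s2 : ℕ} (W1 : Fin (r1 + 3) → Fin (r2 + 3) → Fin (s1 + 2) → ℝ)
    (W2 : Fin (r1 + 3) → Fin (r2 + 3) → Fin (s2 + 2) → ℝ) : Prop :=
  (∀ x1 x2 y1, 0 ≤ W1 x1 x2 y1) ∧ (∀ x1 x2 y2, 0 ≤ W2 x1 x2 y2) ∧
  (∀ x1 x2, ∑ y1, W1 x1 x2 y1 = 1) ∧ (∀ x1 x2, ∑ y2, W2 x1 x2 y2 = 1) ∧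
  (∀ x2 y2, W2 0 x2 y2 = 1 / ((s2 : ℝ) + 2)) ∧
  (∀ x2, ∀ x1 : Fin (r1 + 3), x1 ≠ 0 →
    ∃ σ : Equiv.Perm (Fin (s2 + 2)), ∀ y2, W2 x1 x2 y2 = W2 1 x2 (σ y2)) ∧
  (∀ x2, ∀ y2 y2' : Fin (s2 + 2),
    ∑ x1 ∈ Finset.univ.filter (fun x1 => x1 ≠ (0 : Fin (r1 + 3))), W2 x1 x2 y2 =
    ∑ x1 ∈ Finset.univ.filter (fun x1 => x1 ≠ (0 : Fin (r1 + 3))), W2 x1 x2 y2') ∧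
  (∀ x1 y1, W1 x1 0 y1 = 1 / ((s1 : ℝ) + 2)) ∧
  (∀ x1, ∀ x2 : Fin (r2 + 3), x2 ≠ 0 →
    ∃ σ : Equiv.Perm (Fin (s1 + 2)), ∀ y1, W1 x1 x2 y1 = W1 x1 1 (σ y1)) ∧
  (∀ x1, ∀ y1 y1' : Fin (s1 + 2),
    ∑ x2 ∈ Finset.univ.filter (fun x2 => x2 ≠ (0 : Fin (r2 + 3))), W1 x1 x2 y1 =
    ∑ x2 ∈ Finset.univ.filter (fun x2 => x2 ≠ (0 : Fin (r2 + 3))), W1 x1 x2 y1')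

/-- `C_{1,x₂} = log s₂ − H(row of input 1 of Q_{1,x₂})`. -/
noncomputable def C1 {r1 r2 s2 : ℕ} (W2 : Fin (r1 + 3) → Fin (r2 + 3) → Fin (s2 + 2) → ℝ)
    (x2 : Fin (r2 + 3)) : ℝ := Real.log ((s2 : ℝ) + 2) - ent (fun y2 => W2 1 x2 y2)

/-- `C_{2,x₁} = log s₁ − H(row of input 1 of Q_{2,x₁})`. -/
noncomputable def C2 {r1 r2 s1 : ℕ} (W1 : Fin (r1 + 3) → Fin (r2 + 3) → Fin (s1 + 2) → ℝ)
    (x1 : Fin (r1 + 3)) : ℝ := Real.log ((s1 : ℝ) + 2) - ent (fun y1 => W1 x1 1 y1)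

/-- The channel symmetry property: `C_{1,x₂} = C_{1,1}` for all `x₂ ≠ 0` and
`C_{2,x₁} = C_{2,1}` for all `x₁ ≠ 0`. -/
def SymProp {r1 r2 s1 s2 : ℕ} (W1 : Fin (r1 + 3) → Fin (r2 + 3) → Fin (s1 + 2) → ℝ)
    (W2 : Fin (r1 + 3) → Fin (r2 + 3) → Fin (s2 + 2) → ℝ) : Prop :=
  (∀ x2 : Fin (r2 + 3), x2 ≠ 0 → C1 W2 x2 = C1 W2 1) ∧
  (∀ x1 : Fin (r1 + 3), x1 ≠ 0 → C2 W1 x1 = C2 W1 1)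


lemma jensen_qlogq {t : ℕ} (ht : 0 < t) (q : Fin t → ℝ) (hq : ∀ y, 0 ≤ q y) :
    (∑ y, q y) * Real.log ((∑ y, q y) / t) ≤ ∑ y, q y * Real.log (q y) := by
  have htR : (0:ℝ) < t := by exact_mod_cast ht
  have h := Real.convexOn_mul_log.map_sum_le (t := Finset.univ)
    (w := fun _ : Fin t => (t:ℝ)⁻¹) (p := q)
    (fun i _ => by positivity)
    (by simp [Finset.card_univ]; field_simp)
    (fun i _ => hq i)
  simp only [smul_eq_mul, ← Finset.mul_sum] at h
  have h2 := mul_le_mul_of_nonneg_left h htR.le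
  calc (∑ y, q y) * Real.log ((∑ y, q y) / t)
      = (t:ℝ) * (((t:ℝ)⁻¹ * ∑ y, q y) * Real.log ((t:ℝ)⁻¹ * ∑ y, q y)) := by
        rw [div_eq_inv_mul]; field_simp
    _ ≤ (t:ℝ) * ((t:ℝ)⁻¹ * ∑ y, q y * Real.log (q y)) := h2
    _ = ∑ y, q y * Real.log (q y) := by field_simp

lemma key_bound {m t : ℕ} (ht : 0 < t) (p : Fin m → ℝ) (hp : ∀ x, 0 ≤ p x)
    (W : Fin m → Fin t → ℝ) (hW0 : ∀ x y, 0 ≤ W x y) (hWs : ∀ x, ∑ y, W x y = 1)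
    (x0 : Fin m) (hunif : ∀ y, W x0 y = 1 / t)
    (C : ℝ) (hC : ∀ x, x ≠ x0 → ∑ y, W x y * Real.log (W x y) = C - Real.log t) :
    ∑ x, ∑ y, p x * W x y *
      Real.log (W x y / ((∑ x', p x' * W x' y) / (∑ x', p x')))
      ≤ (∑ x, p x) * (1 - p x0 / (∑ x, p x)) * C := by
  have htR : (0:ℝ) < t := by exact_mod_cast ht
  set S : ℝ := ∑ x, p x with hS
  rcases eq_or_lt_of_le (Finset.sum_nonneg (fun x _ => hp x) : (0:ℝ) ≤ S) with h0 | hSpos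
  · -- S = 0, all p x = 0
    have hz : ∀ x, p x = 0 := by
      intro x
      have := (Finset.sum_eq_zero_iff_of_nonneg (fun x _ => hp x)).1 h0.symm
      exact this x (Finset.mem_univ x)
    have hS0 : S = 0 := h0.symm
    simp [hz, hS0]
  · set q : Fin t → ℝ := fun y => ∑ x, p x * W x y with hq
    have hqnn : ∀ y, 0 ≤ q y := fun y =>
      Finset.sum_nonneg (fun x _ => mul_nonneg (hp x) (hW0 x y))
    have hqsum : ∑ y, q y = S := by
      rw [Finset.sum_comm]
      simp only [← Finset.mul_sum, hWs, mul_one, hS]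
    have hsplit : ∀ x y, p x * W x y * Real.log (W x y / (q y / S)) =
        p x * W x y * Real.log (W x y) + p x * W x y * Real.log S
          - p x * W x y * Real.log (q y) := by
      intro x y
      by_cases hz : p x * W x y = 0
      · rw [hz]; ring
      · have hWpos : 0 < W x y :=
          lt_of_le_of_ne (hW0 x y) (fun h => hz (by rw [← h, mul_zero]))
        have hppos : 0 < p x := lt_of_le_of_ne (hp x)
          (fun h => hz (by rw [← h, zero_mul]))
        have hqpos : 0 < q y := by
          refine lt_of_lt_of_le (mul_pos hppos hWpos) ?_
          exact Finset.single_le_sum (fun x' _ => mul_nonneg (hp x') (hW0 x' y))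
            (Finset.mem_univ x)
        rw [Real.log_div hWpos.ne' (div_pos hqpos hSpos).ne',
          Real.log_div hqpos.ne' hSpos.ne']
        ring
    have hLHS : ∑ x, ∑ y, p x * W x y * Real.log (W x y / (q y / S)) =
        (∑ x, p x * ∑ y, W x y * Real.log (W x y)) + S * Real.log S
          - ∑ y, q y * Real.log (q y) := by
      simp only [hsplit, Finset.sum_add_distrib, Finset.sum_sub_distrib]
      congr 1
      congr 1
      · apply Finset.sum_congr rfl; intro x _
        rw [Finset.mul_sum]; apply Finset.sum_congr rfl; intro y _; ring
      · rw [hS, Finset.sum_mul]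
        apply Finset.sum_congr rfl; intro x _
        rw [← Finset.sum_mul, ← Finset.mul_sum, hWs, mul_one]
      · rw [Finset.sum_comm]
        apply Finset.sum_congr rfl; intro y _
        rw [← Finset.sum_mul]
    have hT1 : (∑ x, p x * ∑ y, W x y * Real.log (W x y)) =
        (S - p x0) * C - S * Real.log t := by
      have hx0 : ∑ y, W x0 y * Real.log (W x0 y) = - Real.log t := by
        simp only [hunif, one_div, Real.log_inv]
        rw [Finset.sum_const, Finset.card_univ, Fintype.card_fin, nsmul_eq_mul]
        field_simp
      rw [← Finset.add_sum_erase _ _ (Finset.mem_univ x0), hx0]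
      have : ∑ x ∈ Finset.univ.erase x0, p x * ∑ y, W x y * Real.log (W x y)
          = ∑ x ∈ Finset.univ.erase x0, p x * (C - Real.log t) := by
        apply Finset.sum_congr rfl; intro x hx
        rw [hC x (Finset.mem_erase.1 hx).1]
      rw [this, ← Finset.sum_mul]
      have herase : ∑ x ∈ Finset.univ.erase x0, p x = S - p x0 := by
        rw [hS, ← Finset.add_sum_erase _ _ (Finset.mem_univ x0)]; ring
      rw [herase]; ring
    have hJ := jensen_qlogq ht q hqnn
    rw [hqsum, Real.log_div hSpos.ne' htR.ne'] at hJ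
    have hfinal : ∑ x, ∑ y, p x * W x y * Real.log (W x y / (q y / S))
        ≤ (S - p x0) * C := by
      rw [hLHS, hT1]; nlinarith [hJ]
    calc ∑ x, ∑ y, p x * W x y * Real.log (W x y / ((∑ x', p x' * W x' y) / (∑ x', p x')))
        = ∑ x, ∑ y, p x * W x y * Real.log (W x y / (q y / S)) := rfl
      _ ≤ (S - p x0) * C := hfinal
      _ = S * (1 - p x0 / S) * C := by have hS0 : S ≠ 0 := hSpos.ne'; field_simp

/-- Bounds on the conditional mutual informations in terms of the one-way
capacities: terms with `marg2 P x2 = 0` (resp. `marg1 P x1 = 0`) vanish since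
division by zero is zero. -/
theorem stmt8 (r1 r2 s1 s2 : ℕ)
    (W1 : Fin (r1 + 3) → Fin (r2 + 3) → Fin (s1 + 2) → ℝ)
    (W2 : Fin (r1 + 3) → Fin (r2 + 3) → Fin (s2 + 2) → ℝ)
    (hW : GenPTT W1 W2) (hSym : SymProp W1 W2)
    (P : Fin (r1 + 3) → Fin (r2 + 3) → ℝ) (hP : IsJointProbDist P) :
    condMI1 P W2 ≤ ∑ x2, marg2 P x2 * (1 - P 0 x2 / marg2 P x2) * C1 W2 x2 ∧
    condMI2 P W1 ≤ ∑ x1, marg1 P x1 * (1 - P x1 0 / marg1 P x1) * C2 W1 x1 := by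
  
  obtain ⟨h1n, h2n, h1s, h2s, h2u, h2p, h2c, h1u, h1p, h1c⟩ := hW
  constructor
  · unfold condMI1
    apply Finset.sum_le_sum
    intro x2 _
    have hk := key_bound (m := r1+3) (t := s2+2) (by omega)
      (fun x1 => P x1 x2) (fun x1 => hP.1 x1 x2)
      (fun x1 y => W2 x1 x2 y) (fun x1 y => h2n x1 x2 y) (fun x1 => h2s x1 x2)
      0 (fun y => by beta_reduce; rw [h2u x2 y]; push_cast; ring)
      (C1 W2 x2)
      (fun x1 hx1 => by
        beta_reduce
        obtain ⟨σ, hσ⟩ := h2p x2 x1 hx1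
        have hperm : ∑ y, W2 x1 x2 y * Real.log (W2 x1 x2 y)
            = ∑ y, W2 1 x2 y * Real.log (W2 1 x2 y) := by
          rw [show (∑ y, W2 x1 x2 y * Real.log (W2 x1 x2 y))
              = ∑ y, W2 1 x2 (σ y) * Real.log (W2 1 x2 (σ y)) from
            Finset.sum_congr rfl (fun y _ => by rw [hσ y])]
          exact Equiv.sum_comp σ (fun y => W2 1 x2 y * Real.log (W2 1 x2 y))
        rw [hperm]
        unfold C1 ent
        push_cast
        ring)
    simpa [marg2] using hk
  · unfold condMI2
    apply Finset.sum_le_sum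
    intro x1 _
    have hk := key_bound (m := r2+3) (t := s1+2) (by omega)
      (fun x2 => P x1 x2) (fun x2 => hP.1 x1 x2)
      (fun x2 y => W1 x1 x2 y) (fun x2 y => h1n x1 x2 y) (fun x2 => h1s x1 x2)
      0 (fun y => by beta_reduce; rw [h1u x1 y]; push_cast; ring)
      (C2 W1 x1)
      (fun x2 hx2 => by
        beta_reduce
        obtain ⟨σ, hσ⟩ := h1p x1 x2 hx2
        have hperm : ∑ y, W1 x1 x2 y * Real.log (W1 x1 x2 y)
            = ∑ y, W1 x1 1 y * Real.log (W1 x1 1 y) := by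
          rw [show (∑ y, W1 x1 x2 y * Real.log (W1 x1 x2 y))
              = ∑ y, W1 x1 1 (σ y) * Real.log (W1 x1 1 (σ y)) from
            Finset.sum_congr rfl (fun y _ => by rw [hσ y])]
          exact Equiv.sum_comp σ (fun y => W1 x1 1 y * Real.log (W1 x1 1 y))
        rw [hperm]
        unfold C2 ent
        push_cast
        ring)
    simpa [marg1] using hk
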